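/- For every finite graph G₁ and every finite bipartite graph G₂, the stack-number of the cartesian product satisfies sn(G₁ □ G₂) ≤ sn(G₁) + dsn(G₂). -/

import Mathlib

open SimpleGraph

/-- Two (unordered) pairs of vertices cross with respect to the strict order `lt`:
with `e = {v,w}`, `f = {x,y}`, `v ≺ w`, `x ≺ y`, they cross if
`v ≺ x ≺ w ≺ y` or `x ≺ v ≺ y ≺ w`. -/
def Cross {V : Type*} (lt : V → V → Prop) (e f : Sym2 V) : Prop :=
  ∃ v w x y : V, e = s(v, w) ∧ f = s(x, y) ∧
    ((lt v x ∧ lt x w ∧ lt w y) ∨ (lt x v ∧ lt v y ∧ lt y w))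

/-- Two (unordered) pairs of vertices nest with respect to the strict order `lt`:
with `e = {v,w}`, `f = {x,y}`, `v ≺ w`, `x ≺ y`, they nest if
`v ≺ x ≺ y ≺ w` or `x ≺ v ≺ w ≺ y`. -/
def Nest {V : Type*} (lt : V → V → Prop) (e f : Sym2 V) : Prop :=
  ∃ v w x y : V, e = s(v, w) ∧ f = s(x, y) ∧
    ((lt v x ∧ lt x y ∧ lt y w) ∨ (lt x v ∧ lt v w ∧ lt w y))

/-- `(lt, φ)` is a `k`-stack layout of `G`: `lt` is a linear (strict total) order on the
vertices and no two edges with the same colour cross. -/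
def IsStackLayout {V : Type*} {k : ℕ} (G : SimpleGraph V)
    (lt : V → V → Prop) (φ : Sym2 V → Fin k) : Prop :=
  IsStrictTotalOrder V lt ∧
    ∀ e ∈ G.edgeSet, ∀ f ∈ G.edgeSet, φ e = φ f → ¬ Cross lt e f

/-- `(lt, φ)` is a `k`-queue layout of `G`: `lt` is a linear (strict total) order on the
vertices and no two edges with the same colour nest. -/
def IsQueueLayout {V : Type*} {k : ℕ} (G : SimpleGraph V)
    (lt : V → V → Prop) (φ : Sym2 V → Fin k) : Prop :=
  IsStrictTotalOrder V lt ∧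
    ∀ e ∈ G.edgeSet, ∀ f ∈ G.edgeSet, φ e = φ f → ¬ Nest lt e f

/-- The stack-number of `G`: the least `k` such that `G` has a `k`-stack layout. -/
noncomputable def stackNumber {V : Type*} (G : SimpleGraph V) : ℕ :=
  sInf {k | ∃ (lt : V → V → Prop) (φ : Sym2 V → Fin k), IsStackLayout G lt φ}

/-- The queue-number of `G`: the least `k` such that `G` has a `k`-queue layout. -/
noncomputable def queueNumber {V : Type*} (G : SimpleGraph V) : ℕ :=
  sInf {k | ∃ (lt : V → V → Prop) (φ : Sym2 V → Fin k), IsQueueLayout G lt φ}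

/-- A queue layout is strict if for every vertex `u` and neighbours `v, w` of `u` with
`u ≺ v ≺ w` or `v ≺ w ≺ u`, the edges `uv` and `uw` get different colours. -/
def IsStrictQueueLayout {V : Type*} {k : ℕ} (G : SimpleGraph V)
    (lt : V → V → Prop) (φ : Sym2 V → Fin k) : Prop :=
  IsQueueLayout G lt φ ∧
    ∀ u v w : V, G.Adj u v → G.Adj u w →
      ((lt u v ∧ lt v w) ∨ (lt v w ∧ lt w u)) → φ s(u, v) ≠ φ s(u, w)

/-- The strict queue-number of `G`. -/
noncomputable def strictQueueNumber {V : Type*} (G : SimpleGraph V) : ℕ :=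
  sInf {k | ∃ (lt : V → V → Prop) (φ : Sym2 V → Fin k), IsStrictQueueLayout G lt φ}

/-- A stack layout is dispersable if the colouring is a proper edge-colouring. -/
def IsDispersableStackLayout {V : Type*} {k : ℕ} (G : SimpleGraph V)
    (lt : V → V → Prop) (φ : Sym2 V → Fin k) : Prop :=
  IsStackLayout G lt φ ∧
    ∀ u v w : V, G.Adj u v → G.Adj u w → v ≠ w → φ s(u, v) ≠ φ s(u, w)

/-- The dispersable stack-number of `G`. -/
noncomputable def dispersableStackNumber {V : Type*} (G : SimpleGraph V) : ℕ :=
  sInf {k | ∃ (lt : V → V → Prop) (φ : Sym2 V → Fin k), IsDispersableStackLayout G lt φ}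

/-- The star `S_b` with root `none` and leaves `some i`, `i : Fin b`. -/
def starGraph (b : ℕ) : SimpleGraph (Option (Fin b)) :=
  SimpleGraph.fromRel (fun v w => v = none ∧ w ≠ none)

/-- The triangulated grid `H_n` on vertex set `Fin n × Fin n` (0-indexed), with horizontal
edges `(x,y)(x+1,y)`, vertical edges `(x,y)(x,y+1)` and diagonal edges `(x,y)(x+1,y+1)`. -/
def triGrid (n : ℕ) : SimpleGraph (Fin n × Fin n) :=
  SimpleGraph.fromRel (fun p q =>
    ((p.1 : ℕ) + 1 = (q.1 : ℕ) ∧ p.2 = q.2) ∨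
    (p.1 = q.1 ∧ (p.2 : ℕ) + 1 = (q.2 : ℕ)) ∨
    ((p.1 : ℕ) + 1 = (q.1 : ℕ) ∧ (p.2 : ℕ) + 1 = (q.2 : ℕ)))

section StackAux

lemma not_cross_self {V : Type*} {lt : V → V → Prop} (h : IsStrictTotalOrder V lt)
    (e : Sym2 V) : ¬ Cross lt e e := by
  have asym : ∀ a b, lt a b → lt b a → False := fun a b p q =>
    h.irrefl a (h.trans _ _ _ p q)
  rintro ⟨v, w, x, y, rfl, hf, (⟨h1, h2, h3⟩ | ⟨h1, h2, h3⟩)⟩ <;>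
      rw [Sym2.eq_iff] at hf <;>
    rcases hf with ⟨rfl, rfl⟩ | ⟨rfl, rfl⟩
  · exact h.irrefl _ h1
  · exact asym _ _ h1 h3
  · exact h.irrefl _ h1
  · exact h.irrefl _ h2

lemma exists_dispersableStackLayout {V : Type*} [Fintype V] (G : SimpleGraph V) :
    ∃ (k : ℕ) (lt : V → V → Prop) (φ : Sym2 V → Fin k), IsDispersableStackLayout G lt φ := by
  classical
  have hsto : IsStrictTotalOrder V (WellOrderingRel (α := V)) := inferInstance
  refine ⟨Fintype.card (Sym2 V), WellOrderingRel, Fintype.equivFin (Sym2 V), ⟨hsto, ?_⟩, ?_⟩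
  · intro e _ f _ hφ
    have heq : e = f := (Fintype.equivFin (Sym2 V)).injective hφ
    subst heq
    exact not_cross_self hsto e
  · intro u v w huv huw hvw h
    have heq : s(u, v) = s(u, w) := (Fintype.equivFin (Sym2 V)).injective h
    rw [Sym2.eq_iff] at heq
    rcases heq with ⟨-, h2⟩ | ⟨h1, -⟩
    · exact hvw h2
    · exact huw.ne h1

variable {V₁ V₂ : Type*} {k₁ k₂ : ℕ}

/-- The order on `V₁ × V₂`: blocks ordered by `lt₂`; within a block the order is `lt₁`
or its reverse, depending on the colour of the block. -/
def prodOrder (lt₁ : V₁ → V₁ → Prop) (lt₂ : V₂ → V₂ → Prop) (c : V₂ → Fin 2) :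
    V₁ × V₂ → V₁ × V₂ → Prop :=
  fun p q => lt₂ p.2 q.2 ∨ (p.2 = q.2 ∧
    ((c p.2 = 0 ∧ lt₁ p.1 q.1) ∨ (c p.2 ≠ 0 ∧ lt₁ q.1 p.1)))

open Classical in
noncomputable def prodColorFun (φ₁ : Sym2 V₁ → Fin k₁) (φ₂ : Sym2 V₂ → Fin k₂)
    (p q : V₁ × V₂) : Fin (k₁ + k₂) :=
  if p.2 = q.2 then (φ₁ s(p.1, q.1)).castAdd k₂ else (φ₂ s(p.2, q.2)).natAdd k₁

noncomputable def prodColor (φ₁ : Sym2 V₁ → Fin k₁) (φ₂ : Sym2 V₂ → Fin k₂) :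
    Sym2 (V₁ × V₂) → Fin (k₁ + k₂) :=
  Sym2.lift ⟨prodColorFun φ₁ φ₂, by
    intro p q
    by_cases h : p.2 = q.2
    · simp only [prodColorFun]
      rw [if_pos h, if_pos h.symm, Sym2.eq_swap]
    · simp only [prodColorFun]
      rw [if_neg h, if_neg (Ne.symm h), Sym2.eq_swap]⟩

lemma prodColor_same (φ₁ : Sym2 V₁ → Fin k₁) (φ₂ : Sym2 V₂ → Fin k₂)
    {p q : V₁ × V₂} (h : p.2 = q.2) :
    prodColor φ₁ φ₂ s(p, q) = (φ₁ s(p.1, q.1)).castAdd k₂ := by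
  simp only [prodColor, Sym2.lift_mk, prodColorFun]
  rw [if_pos h]

lemma prodColor_diff (φ₁ : Sym2 V₁ → Fin k₁) (φ₂ : Sym2 V₂ → Fin k₂)
    {p q : V₁ × V₂} (h : p.2 ≠ q.2) :
    prodColor φ₁ φ₂ s(p, q) = (φ₂ s(p.2, q.2)).natAdd k₁ := by
  simp only [prodColor, Sym2.lift_mk, prodColorFun]
  rw [if_neg h]

lemma prodOrder_isSTO {lt₁ : V₁ → V₁ → Prop} {lt₂ : V₂ → V₂ → Prop}
    (h₁ : IsStrictTotalOrder V₁ lt₁) (h₂ : IsStrictTotalOrder V₂ lt₂) (c : V₂ → Fin 2) :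
    IsStrictTotalOrder (V₁ × V₂) (prodOrder lt₁ lt₂ c) := by
  refine { trichotomous := ?_, irrefl := ?_, trans := ?_ }
  · suffices H : ∀ p q, prodOrder lt₁ lt₂ c p q ∨ p = q ∨ prodOrder lt₁ lt₂ c q p from
      fun p q h1 h2 => ((H p q).resolve_left h1).resolve_right h2
    intro p q
    rcases @trichotomous _ _ h₂.toTrichotomous p.2 q.2 with h | h | h
    · exact Or.inl (Or.inl h)
    · by_cases hc0 : c p.2 = 0
      · rcases @trichotomous _ _ h₁.toTrichotomous p.1 q.1 with h1 | h1 | h1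
        · exact Or.inl (Or.inr ⟨h, Or.inl ⟨hc0, h1⟩⟩)
        · exact Or.inr (Or.inl (Prod.ext h1 h))
        · exact Or.inr (Or.inr (Or.inr ⟨h.symm, Or.inl ⟨by rw [← h]; exact hc0, h1⟩⟩))
      · rcases @trichotomous _ _ h₁.toTrichotomous p.1 q.1 with h1 | h1 | h1
        · exact Or.inr (Or.inr (Or.inr ⟨h.symm, Or.inr ⟨by rw [← h]; exact hc0, h1⟩⟩))
        · exact Or.inr (Or.inl (Prod.ext h1 h))
        · exact Or.inl (Or.inr ⟨h, Or.inr ⟨hc0, h1⟩⟩)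
    · exact Or.inr (Or.inr (Or.inl h))
  · rintro p (h | ⟨-, ⟨-, h⟩ | ⟨-, h⟩⟩)
    · exact h₂.irrefl _ h
    · exact h₁.irrefl _ h
    · exact h₁.irrefl _ h
  · rintro a b d (h | ⟨e1, o1⟩) (h' | ⟨e2, o2⟩)
    · exact Or.inl (h₂.trans _ _ _ h h')
    · exact Or.inl (by rw [← e2]; exact h)
    · exact Or.inl (by rw [e1]; exact h')
    · refine Or.inr ⟨e1.trans e2, ?_⟩
      rw [← e1] at o2
      rcases o1 with ⟨hc0, l1⟩ | ⟨hc0, l1⟩ <;> rcases o2 with ⟨hc0', l2⟩ | ⟨hc0', l2⟩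
      · exact Or.inl ⟨hc0, h₁.trans _ _ _ l1 l2⟩
      · exact absurd hc0 hc0'
      · exact absurd hc0' hc0
      · exact Or.inr ⟨hc0, h₁.trans _ _ _ l2 l1⟩

lemma prod_key {G₁ : SimpleGraph V₁} {G₂ : SimpleGraph V₂}
    {lt₁ : V₁ → V₁ → Prop} {φ₁ : Sym2 V₁ → Fin k₁}
    {lt₂ : V₂ → V₂ → Prop} {φ₂ : Sym2 V₂ → Fin k₂}
    (h₁ : IsStackLayout G₁ lt₁ φ₁) (h₂ : IsDispersableStackLayout G₂ lt₂ φ₂)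
    {c : V₂ → Fin 2} (hc : ∀ {a b : V₂}, G₂.Adj a b → c a ≠ c b)
    {v w x y : V₁ × V₂} (hvw : (G₁ □ G₂).Adj v w) (hxy : (G₁ □ G₂).Adj x y)
    (hφ : prodColor φ₁ φ₂ s(v, w) = prodColor φ₁ φ₂ s(x, y))
    (o1 : prodOrder lt₁ lt₂ c v x) (o2 : prodOrder lt₁ lt₂ c x w)
    (o3 : prodOrder lt₁ lt₂ c w y) : False := by
  obtain ⟨sto₁, hcr₁⟩ := h₁
  obtain ⟨⟨sto₂, hcr₂⟩, hdisp⟩ := h₂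
  have asym₁ : ∀ a b, lt₁ a b → lt₁ b a → False := fun a b p q =>
    sto₁.irrefl a (sto₁.trans _ _ _ p q)
  have asym₂ : ∀ a b, lt₂ a b → lt₂ b a → False := fun a b p q =>
    sto₂.irrefl a (sto₂.trans _ _ _ p q)
  have hdiffL : ∀ p q : V₁ × V₂, prodOrder lt₁ lt₂ c p q → p.2 ≠ q.2 → lt₂ p.2 q.2 := by
    rintro p q (h | ⟨e, -⟩) hne
    · exact h
    · exact absurd e hne
  have hsameL : ∀ p q : V₁ × V₂, prodOrder lt₁ lt₂ c p q → p.2 = q.2 →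
      ((c p.2 = 0 ∧ lt₁ p.1 q.1) ∨ (c p.2 ≠ 0 ∧ lt₁ q.1 p.1)) := by
    rintro p q (h | ⟨-, o⟩) he
    · rw [he] at h
      exact absurd h (sto₂.irrefl _)
    · exact o
  rcases SimpleGraph.boxProd_adj.mp hvw with ⟨a1, e2⟩ | ⟨a2, e1⟩ <;>
    rcases SimpleGraph.boxProd_adj.mp hxy with ⟨b1, f2⟩ | ⟨b2, f1⟩
  · -- both G₁-edges
    rw [prodColor_same φ₁ φ₂ e2, prodColor_same φ₁ φ₂ f2] at hφ
    have hφ1 : φ₁ s(v.1, w.1) = φ₁ s(x.1, y.1) := by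
      have hval := congrArg Fin.val hφ
      simp only [Fin.coe_castAdd] at hval
      exact Fin.val_injective hval
    by_cases hb : v.2 = x.2
    · have exw : x.2 = w.2 := hb.symm.trans e2
      have ewy : w.2 = y.2 := e2.symm.trans (hb.trans f2)
      have O1 := hsameL v x o1 hb
      have O2 := hsameL x w o2 exw
      have O3 := hsameL w y o3 ewy
      rw [← hb] at O2
      rw [← e2] at O3
      rcases O1 with ⟨hc0, l1⟩ | ⟨hc0, l1⟩
      · rcases O2 with ⟨-, l2⟩ | ⟨hn, -⟩
        · rcases O3 with ⟨-, l3⟩ | ⟨hn, -⟩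
          · exact hcr₁ s(v.1, w.1) (G₁.mem_edgeSet.mpr a1) s(x.1, y.1)
              (G₁.mem_edgeSet.mpr b1) hφ1
              ⟨v.1, w.1, x.1, y.1, rfl, rfl, Or.inl ⟨l1, l2, l3⟩⟩
          · exact hn hc0
        · exact hn hc0
      · rcases O2 with ⟨hn, -⟩ | ⟨-, l2⟩
        · exact hc0 hn
        · rcases O3 with ⟨hn, -⟩ | ⟨-, l3⟩
          · exact hc0 hn
          · exact hcr₁ s(x.1, y.1) (G₁.mem_edgeSet.mpr b1) s(v.1, w.1)
              (G₁.mem_edgeSet.mpr a1) hφ1.symm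
              ⟨y.1, x.1, w.1, v.1, Sym2.eq_swap, Sym2.eq_swap, Or.inl ⟨l3, l2, l1⟩⟩
    · have l : lt₂ v.2 x.2 := hdiffL v x o1 hb
      have hxw : x.2 ≠ w.2 := by rw [← e2]; exact Ne.symm hb
      have l' : lt₂ x.2 w.2 := hdiffL x w o2 hxw
      rw [← e2] at l'
      exact asym₂ _ _ l l'
  · -- G₁-edge and G₂-edge : colours differ
    rw [prodColor_same φ₁ φ₂ e2, prodColor_diff φ₁ φ₂ b2.ne] at hφ
    have hval := congrArg Fin.val hφ
    simp only [Fin.coe_castAdd, Fin.coe_natAdd] at hval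
    have hlt := (φ₁ s(v.1, w.1)).isLt
    omega
  · -- G₂-edge and G₁-edge : colours differ
    rw [prodColor_diff φ₁ φ₂ a2.ne, prodColor_same φ₁ φ₂ f2] at hφ
    have hval := congrArg Fin.val hφ
    simp only [Fin.coe_castAdd, Fin.coe_natAdd] at hval
    have hlt := (φ₁ s(x.1, y.1)).isLt
    omega
  · -- both G₂-edges
    rw [prodColor_diff φ₁ φ₂ a2.ne, prodColor_diff φ₁ φ₂ b2.ne] at hφ
    have hφ2 : φ₂ s(v.2, w.2) = φ₂ s(x.2, y.2) := by
      have hval := congrArg Fin.val hφ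
      simp only [Fin.coe_natAdd] at hval
      exact Fin.val_injective (by omega)
    by_cases heq : s(v.2, w.2) = s(x.2, y.2)
    · rw [Sym2.eq_iff] at heq
      rcases heq with ⟨e1', e2'⟩ | ⟨e1', e2'⟩
      · have O1 := hsameL v x o1 e1'
        have O3 := hsameL w y o3 e2'
        have hcc := hc a2
        rw [← e1, ← f1] at O3
        have fin2 : ∀ a b : Fin 2, a ≠ 0 → b ≠ 0 → a = b := by decide
        rcases O1 with ⟨p0, l1⟩ | ⟨p0, l1⟩ <;> rcases O3 with ⟨q0, l3⟩ | ⟨q0, l3⟩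
        · exact hcc (p0.trans q0.symm)
        · exact asym₁ _ _ l1 l3
        · exact asym₁ _ _ l1 l3
        · exact hcc (fin2 _ _ p0 q0)
      · have hvx : v.2 ≠ x.2 := by rw [← e2']; exact a2.ne
        have l := hdiffL v x o1 hvx
        have hwy : w.2 ≠ y.2 := by rw [← e1']; exact Ne.symm a2.ne
        have l' := hdiffL w y o3 hwy
        rw [e2', ← e1'] at l'
        exact asym₂ _ _ l l'
    · have shared : ∀ a b a' b' : V₂, G₂.Adj a b → G₂.Adj a' b' →
          φ₂ s(a, b) = φ₂ s(a', b') → s(a, b) ≠ s(a', b') → a ≠ a' := by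
        rintro a b a' b' hab ha'b' hphi hne rfl
        by_cases hbb : b = b'
        · exact hne (by rw [hbb])
        · exact hdisp a b b' hab ha'b' hbb hphi
      have n1 : v.2 ≠ x.2 := shared _ _ _ _ a2 b2 hφ2 heq
      have n2 : w.2 ≠ x.2 := shared w.2 v.2 x.2 y.2 a2.symm b2
        ((congrArg φ₂ Sym2.eq_swap).trans hφ2)
        (fun h => heq ((Sym2.eq_swap (a := v.2)).trans h))
      have n4 : w.2 ≠ y.2 := shared w.2 v.2 y.2 x.2 a2.symm b2.symm
        ((congrArg φ₂ Sym2.eq_swap).trans (hφ2.trans (congrArg φ₂ Sym2.eq_swap)))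
        (fun h => heq (((Sym2.eq_swap (a := v.2)).trans h).trans Sym2.eq_swap))
      have l1 := hdiffL v x o1 n1
      have l2 := hdiffL x w o2 (Ne.symm n2)
      have l3 := hdiffL w y o3 n4
      exact hcr₂ s(v.2, w.2) (G₂.mem_edgeSet.mpr a2) s(x.2, y.2)
        (G₂.mem_edgeSet.mpr b2) hφ2
        ⟨v.2, w.2, x.2, y.2, rfl, rfl, Or.inl ⟨l1, l2, l3⟩⟩

lemma prod_isStackLayout {G₁ : SimpleGraph V₁} {G₂ : SimpleGraph V₂}
    {lt₁ : V₁ → V₁ → Prop} {φ₁ : Sym2 V₁ → Fin k₁}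
    {lt₂ : V₂ → V₂ → Prop} {φ₂ : Sym2 V₂ → Fin k₂}
    (h₁ : IsStackLayout G₁ lt₁ φ₁) (h₂ : IsDispersableStackLayout G₂ lt₂ φ₂)
    {c : V₂ → Fin 2} (hc : ∀ {a b : V₂}, G₂.Adj a b → c a ≠ c b) :
    IsStackLayout (G₁ □ G₂) (prodOrder lt₁ lt₂ c) (prodColor φ₁ φ₂) := by
  refine ⟨prodOrder_isSTO h₁.1 h₂.1.1 c, ?_⟩
  rintro e he f hf hφ ⟨v, w, x, y, rfl, rfl, h | h⟩
  · exact prod_key h₁ h₂ hc ((G₁ □ G₂).mem_edgeSet.mp he) ((G₁ □ G₂).mem_edgeSet.mp hf)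
      hφ h.1 h.2.1 h.2.2
  · exact prod_key h₁ h₂ hc ((G₁ □ G₂).mem_edgeSet.mp hf) ((G₁ □ G₂).mem_edgeSet.mp he)
      hφ.symm h.1 h.2.1 h.2.2

end StackAux

/-- `sn(G₁ □ G₂) ≤ sn(G₁) + dsn(G₂)` for every finite graph `G₁` and
every finite bipartite graph `G₂`. -/
theorem stmt14 {V₁ V₂ : Type*} [Fintype V₁] [Fintype V₂]
    (G₁ : SimpleGraph V₁) (G₂ : SimpleGraph V₂) (hbip : G₂.Colorable 2) :
    stackNumber (G₁ □ G₂) ≤ stackNumber G₁ + dispersableStackNumber G₂ := by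
  classical
  obtain ⟨kd, ltd, φd, hd⟩ := exists_dispersableStackLayout G₁
  have hne₁ : {k | ∃ (lt : V₁ → V₁ → Prop) (φ : Sym2 V₁ → Fin k),
      IsStackLayout G₁ lt φ}.Nonempty := ⟨kd, ltd, φd, hd.1⟩
  obtain ⟨ke, lte, φe, he⟩ := exists_dispersableStackLayout G₂
  have hne₂ : {k | ∃ (lt : V₂ → V₂ → Prop) (φ : Sym2 V₂ → Fin k),
      IsDispersableStackLayout G₂ lt φ}.Nonempty := ⟨ke, lte, φe, he⟩
  have hm₁ : ∃ (lt : V₁ → V₁ → Prop) (φ : Sym2 V₁ → Fin (stackNumber G₁)),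
      IsStackLayout G₁ lt φ := Nat.sInf_mem hne₁
  have hm₂ : ∃ (lt : V₂ → V₂ → Prop) (φ : Sym2 V₂ → Fin (dispersableStackNumber G₂)),
      IsDispersableStackLayout G₂ lt φ := Nat.sInf_mem hne₂
  obtain ⟨lt₁, φ₁, h₁⟩ := hm₁
  obtain ⟨lt₂, φ₂, h₂⟩ := hm₂
  obtain ⟨C⟩ := hbip
  exact Nat.sInf_le ⟨prodOrder lt₁ lt₂ C, prodColor φ₁ φ₂,
    prod_isStackLayout h₁ h₂ (fun hab => C.valid hab)⟩
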